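/- Let q ∈ ℂ with q not a root of unity, and let B be the ℂ-algebra generated by x±1, y±1 with xy = qyx. Every algebra automorphism σ of B maps x to λ·xᵃyᵇ and y to μ·xᶜyᵈ for some λ, μ ∈ ℂˣ and integers a,b,c,d with ad - bc = 1. -/

import Mathlib

/-- The defining relations of the algebraic quantum torus with generators
`x = ι 0`, `x⁻¹ = ι 1`, `y = ι 2`, `y⁻¹ = ι 3` and relation `x*y = q·(y*x)`. -/
inductive QTRel (q : ℂ) : FreeAlgebra ℂ (Fin 4) → FreeAlgebra ℂ (Fin 4) → Prop
  | xinv : QTRel q (FreeAlgebra.ι ℂ 0 * FreeAlgebra.ι ℂ 1) 1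
  | xinv' : QTRel q (FreeAlgebra.ι ℂ 1 * FreeAlgebra.ι ℂ 0) 1
  | yinv : QTRel q (FreeAlgebra.ι ℂ 2 * FreeAlgebra.ι ℂ 3) 1
  | yinv' : QTRel q (FreeAlgebra.ι ℂ 3 * FreeAlgebra.ι ℂ 2) 1
  | comm : QTRel q (FreeAlgebra.ι ℂ 0 * FreeAlgebra.ι ℂ 2)
      (q • (FreeAlgebra.ι ℂ 2 * FreeAlgebra.ι ℂ 0))

/-- The quantum torus `B = ℂ⟨x^{±1}, y^{±1}⟩/(xy = q·yx)`. -/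
abbrev QTorus (q : ℂ) := RingQuot (QTRel q)

/-- The invertible generator `x` of the quantum torus. -/
noncomputable def QTx (q : ℂ) : (QTorus q)ˣ where
  val := RingQuot.mkAlgHom ℂ (QTRel q) (FreeAlgebra.ι ℂ 0)
  inv := RingQuot.mkAlgHom ℂ (QTRel q) (FreeAlgebra.ι ℂ 1)
  val_inv := by
    simpa [map_mul, map_one] using RingQuot.mkAlgHom_rel ℂ (QTRel.xinv (q := q))
  inv_val := by
    simpa [map_mul, map_one] using RingQuot.mkAlgHom_rel ℂ (QTRel.xinv' (q := q))

/-- The invertible generator `y` of the quantum torus. -/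
noncomputable def QTy (q : ℂ) : (QTorus q)ˣ where
  val := RingQuot.mkAlgHom ℂ (QTRel q) (FreeAlgebra.ι ℂ 2)
  inv := RingQuot.mkAlgHom ℂ (QTRel q) (FreeAlgebra.ι ℂ 3)
  val_inv := by
    simpa [map_mul, map_one] using RingQuot.mkAlgHom_rel ℂ (QTRel.yinv (q := q))
  inv_val := by
    simpa [map_mul, map_one] using RingQuot.mkAlgHom_rel ℂ (QTRel.yinv' (q := q))



noncomputable section

open Finsupp

/-- Carrier of the concrete model of the quantum torus. -/
def QTM (_u : ℂˣ) : Type := (ℤ ×ₗ ℤ) →₀ ℂ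

namespace QTM

variable {u : ℂˣ}

instance : AddCommGroup (QTM u) := inferInstanceAs (AddCommGroup ((ℤ ×ₗ ℤ) →₀ ℂ))
instance : Module ℂ (QTM u) := inferInstanceAs (Module ℂ ((ℤ ×ₗ ℤ) →₀ ℂ))

/-- The underlying finsupp. -/
def toF (f : QTM u) : (ℤ ×ₗ ℤ) →₀ ℂ := f

/-- The monomial `x^m y^n` (scaled), as an element of the model. -/
def sg (u : ℂˣ) (v : ℤ ×ₗ ℤ) (c : ℂ) : QTM u := Finsupp.single v c

lemma toF_sg (v : ℤ ×ₗ ℤ) (c : ℂ) : (sg u v c).toF = Finsupp.single v c := rfl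

lemma toF_add (f g : QTM u) : (f + g).toF = f.toF + g.toF := rfl

lemma toF_smul (c : ℂ) (f : QTM u) : (c • f).toF = c • f.toF := rfl

lemma toF_zero : (0 : QTM u).toF = 0 := rfl

lemma toF_injective : Function.Injective (toF (u := u)) := fun _ _ h => h

lemma smul_sg (c : ℂ) (v : ℤ ×ₗ ℤ) (d : ℂ) : c • sg u v d = sg u v (c * d) := by
  apply toF_injective
  rw [toF_smul, toF_sg, toF_sg, Finsupp.smul_single']

lemma sg_add_coeff (v : ℤ ×ₗ ℤ) (c d : ℂ) : sg u v c + sg u v d = sg u v (c + d) := by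
  apply toF_injective
  rw [toF_add, toF_sg, toF_sg, toF_sg, Finsupp.single_add]

lemma sg_zero (v : ℤ ×ₗ ℤ) : sg u v 0 = 0 := by
  apply toF_injective
  rw [toF_sg, toF_zero, Finsupp.single_zero]

lemma sg_ne_zero {v : ℤ ×ₗ ℤ} {c : ℂ} (hc : c ≠ 0) : sg u v c ≠ 0 := by
  intro h
  have h2 := congrArg toF h
  rw [toF_sg, toF_zero] at h2
  exact hc (Finsupp.single_eq_zero.mp h2)

/-- Induction principle for the model. -/
lemma induction_lin {p : QTM u → Prop} (f : QTM u) (h0 : p 0)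
    (hadd : ∀ f g, p f → p g → p (f + g)) (hsingle : ∀ v c, p (sg u v c)) : p f :=
  Finsupp.induction_linear (motive := p) (toF f) h0 hadd hsingle

/-- The twisting bicharacter. -/
def tw (u : ℂˣ) (a b : ℤ ×ₗ ℤ) : ℂ := ((u ^ (-((ofLex a).2 * (ofLex b).1)) : ℂˣ) : ℂ)

lemma tw_ne_zero (a b : ℤ ×ₗ ℤ) : tw u a b ≠ 0 := Units.ne_zero _

lemma tw_zero_left (b : ℤ ×ₗ ℤ) : tw u 0 b = 1 := by
  have : (ofLex (0 : ℤ ×ₗ ℤ)).2 = 0 := rfl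
  simp [tw, this]

lemma tw_zero_right (a : ℤ ×ₗ ℤ) : tw u a 0 = 1 := by
  have : (ofLex (0 : ℤ ×ₗ ℤ)).1 = 0 := rfl
  simp [tw, this]

lemma ofLex_add' (a b : ℤ ×ₗ ℤ) : ofLex (a + b) = ofLex a + ofLex b := rfl

lemma tw_cocycle (a b c : ℤ ×ₗ ℤ) :
    tw u a b * tw u (a + b) c = tw u a (b + c) * tw u b c := by
  simp only [tw, ← Units.val_mul, ← zpow_add, ofLex_add', Prod.fst_add, Prod.snd_add]
  congr 2
  ring

instance : Mul (QTM u) :=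
  ⟨fun f g => Finsupp.sum f.toF fun a ca => Finsupp.sum g.toF fun b cb =>
      sg u (a + b) (tw u a b * ca * cb)⟩

lemma mul_def (f g : QTM u) :
    f * g = Finsupp.sum f.toF fun a ca => Finsupp.sum g.toF fun b cb =>
      sg u (a + b) (tw u a b * ca * cb) := rfl

lemma sg_mul_sg (a b : ℤ ×ₗ ℤ) (ca cb : ℂ) :
    sg u a ca * sg u b cb = sg u (a + b) (tw u a b * ca * cb) := by
  rw [mul_def, toF_sg, toF_sg]
  rw [Finsupp.sum_single_index, Finsupp.sum_single_index]
  · simp [sg_zero]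
  · rw [Finsupp.sum_single_index] <;> simp [sg_zero]

lemma zero_mul' (f : QTM u) : 0 * f = 0 := by
  rw [mul_def]; exact Finsupp.sum_zero_index

lemma mul_zero' (f : QTM u) : f * 0 = 0 := by
  rw [mul_def]; simp [toF_zero, Finsupp.sum_zero_index]

lemma add_mul' (f g h : QTM u) : (f + g) * h = f * h + g * h := by
  rw [mul_def, mul_def, mul_def, toF_add]
  apply Finsupp.sum_add_index' <;> intro a <;>
    simp [mul_add, add_mul, sg_zero, ← sg_add_coeff, Finsupp.sum_add]

lemma mul_add' (f g h : QTM u) : f * (g + h) = f * g + f * h := by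
  rw [mul_def, mul_def, mul_def, ← Finsupp.sum_add]
  apply Finsupp.sum_congr
  intro a _
  rw [toF_add]
  apply Finsupp.sum_add_index' <;> intro b <;>
    simp [mul_add, add_mul, sg_zero, ← sg_add_coeff]

lemma mul_assoc' (f g h : QTM u) : f * g * h = f * (g * h) := by
  induction f using induction_lin with
  | h0 => rw [zero_mul', zero_mul', zero_mul']
  | hadd f₁ f₂ ih₁ ih₂ => rw [add_mul', add_mul', add_mul', ih₁, ih₂]
  | hsingle a ca =>
    induction g using induction_lin with
    | h0 => rw [zero_mul', mul_zero', zero_mul']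
    | hadd g₁ g₂ ih₁ ih₂ => rw [add_mul', mul_add', add_mul', mul_add', ih₁, ih₂]
    | hsingle b cb =>
      induction h using induction_lin with
      | h0 => rw [mul_zero', mul_zero', mul_zero']
      | hadd h₁ h₂ ih₁ ih₂ => rw [mul_add', mul_add', mul_add', ih₁, ih₂]
      | hsingle c cc =>
        rw [sg_mul_sg, sg_mul_sg, sg_mul_sg, sg_mul_sg, add_assoc]
        congr 1
        have := tw_cocycle (u := u) a b c
        calc tw u (a + b) c * (tw u a b * ca * cb) * cc
            = (tw u a b * tw u (a + b) c) * (ca * cb * cc) := by ring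
          _ = (tw u a (b + c) * tw u b c) * (ca * cb * cc) := by rw [this]
          _ = tw u a (b + c) * ca * (tw u b c * cb * cc) := by ring

instance : One (QTM u) := ⟨sg u 0 1⟩

lemma one_def : (1 : QTM u) = sg u 0 1 := rfl

lemma one_mul' (f : QTM u) : 1 * f = f := by
  induction f using induction_lin with
  | h0 => rw [mul_zero']
  | hadd f₁ f₂ ih₁ ih₂ => rw [mul_add', ih₁, ih₂]
  | hsingle a ca => rw [one_def, sg_mul_sg, tw_zero_left, zero_add, one_mul, one_mul]

lemma mul_one' (f : QTM u) : f * 1 = f := by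
  induction f using induction_lin with
  | h0 => rw [zero_mul']
  | hadd f₁ f₂ ih₁ ih₂ => rw [add_mul', ih₁, ih₂]
  | hsingle a ca => rw [one_def, sg_mul_sg, tw_zero_right, add_zero, one_mul, mul_one]

instance : Ring (QTM u) :=
  { (inferInstance : AddCommGroup (QTM u)) with
    mul := (· * ·)
    left_distrib := mul_add'
    right_distrib := add_mul'
    zero_mul := zero_mul'
    mul_zero := mul_zero'
    mul_assoc := mul_assoc'
    one := 1
    one_mul := one_mul'
    mul_one := mul_one' }

lemma smul_mul' (c : ℂ) (f g : QTM u) : (c • f) * g = c • (f * g) := by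
  induction f using induction_lin with
  | h0 => rw [smul_zero, zero_mul', smul_zero]
  | hadd f₁ f₂ ih₁ ih₂ => rw [smul_add, add_mul', add_mul', ih₁, ih₂, smul_add]
  | hsingle a ca =>
    induction g using induction_lin with
    | h0 => rw [mul_zero', mul_zero', smul_zero]
    | hadd g₁ g₂ ih₁ ih₂ => rw [mul_add', mul_add', ih₁, ih₂, smul_add]
    | hsingle b cb =>
      rw [smul_sg, sg_mul_sg, sg_mul_sg, smul_sg]
      ring_nf

lemma mul_smul'' (c : ℂ) (f g : QTM u) : f * (c • g) = c • (f * g) := by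
  induction f using induction_lin with
  | h0 => rw [zero_mul', zero_mul', smul_zero]
  | hadd f₁ f₂ ih₁ ih₂ => rw [add_mul', add_mul', ih₁, ih₂, smul_add]
  | hsingle a ca =>
    induction g using induction_lin with
    | h0 => rw [smul_zero, mul_zero', smul_zero]
    | hadd g₁ g₂ ih₁ ih₂ => rw [smul_add, mul_add', mul_add', ih₁, ih₂, smul_add]
    | hsingle b cb =>
      rw [smul_sg, sg_mul_sg, sg_mul_sg, smul_sg]
      ring_nf

instance : Algebra ℂ (QTM u) := Algebra.ofModule smul_mul' mul_smul''

instance : Nontrivial (QTM u) :=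
  ⟨⟨1, 0, by rw [one_def]; exact sg_ne_zero one_ne_zero⟩⟩

end QTM
namespace QTM
variable {u : ℂˣ}

lemma mul_coeff (f g : QTM u) (s : ℤ ×ₗ ℤ) :
    (f * g).toF s = f.toF.sum fun a ca => g.toF.sum fun b cb =>
      if a + b = s then tw u a b * ca * cb else 0 := by
  have : (f * g).toF = Finsupp.sum f.toF fun a ca => Finsupp.sum g.toF fun b cb =>
      Finsupp.single (a + b) (tw u a b * ca * cb) := rfl
  rw [this, Finsupp.sum_apply]
  refine Finsupp.sum_congr fun a _ => ?_
  rw [Finsupp.sum_apply]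
  refine Finsupp.sum_congr fun b _ => ?_
  exact Finsupp.single_apply

lemma mul_coeff_max (f g : QTM u) {A B : ℤ ×ₗ ℤ}
    (hf : ∀ a ∈ f.toF.support, a ≤ A) (hg : ∀ b ∈ g.toF.support, b ≤ B) :
    (f * g).toF (A + B) = tw u A B * f.toF A * g.toF B := by
  classical
  rw [mul_coeff]
  have key : ∀ a ∈ f.toF.support, ∀ b ∈ g.toF.support, a + b = A + B → a = A ∧ b = B := by
    intro a ha b hb hab
    rcases (hf a ha).lt_or_eq with h | h
    · exact absurd hab (ne_of_lt (add_lt_add_of_lt_of_le h (hg b hb)))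
    · exact ⟨h, by rw [h] at hab; exact add_left_cancel hab⟩
  unfold Finsupp.sum
  by_cases hA : A ∈ f.toF.support
  · by_cases hB : B ∈ g.toF.support
    · rw [Finset.sum_eq_single_of_mem A hA]
      · beta_reduce
        rw [Finset.sum_eq_single_of_mem B hB]
        · exact if_pos rfl
        · intro b hb hbB
          exact if_neg fun hc => hbB (key A hA b hb hc).2
      · intro a ha haA
        apply Finset.sum_eq_zero
        intro b hb
        exact if_neg fun hc => haA (key a ha b hb hc).1
    · have hgB : g.toF B = 0 := Finsupp.notMem_support_iff.mp hB
      rw [hgB, mul_zero]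
      apply Finset.sum_eq_zero; intro a ha
      apply Finset.sum_eq_zero; intro b hb
      exact if_neg fun hc => hB ((key a ha b hb hc).2 ▸ hb)
  · have hfA : f.toF A = 0 := Finsupp.notMem_support_iff.mp hA
    rw [hfA, mul_zero, zero_mul]
    apply Finset.sum_eq_zero; intro a ha
    apply Finset.sum_eq_zero; intro b hb
    exact if_neg fun hc => hA ((key a ha b hb hc).1 ▸ ha)

lemma mul_coeff_min (f g : QTM u) {A B : ℤ ×ₗ ℤ}
    (hf : ∀ a ∈ f.toF.support, A ≤ a) (hg : ∀ b ∈ g.toF.support, B ≤ b) :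
    (f * g).toF (A + B) = tw u A B * f.toF A * g.toF B := by
  classical
  rw [mul_coeff]
  have key : ∀ a ∈ f.toF.support, ∀ b ∈ g.toF.support, a + b = A + B → a = A ∧ b = B := by
    intro a ha b hb hab
    rcases (hf a ha).lt_or_eq with h | h
    · exact absurd hab (ne_of_gt (add_lt_add_of_lt_of_le h (hg b hb)))
    · exact ⟨h.symm, by rw [← h] at hab; exact add_left_cancel hab⟩
  unfold Finsupp.sum
  by_cases hA : A ∈ f.toF.support
  · by_cases hB : B ∈ g.toF.support
    · rw [Finset.sum_eq_single_of_mem A hA]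
      · beta_reduce
        rw [Finset.sum_eq_single_of_mem B hB]
        · exact if_pos rfl
        · intro b hb hbB
          exact if_neg fun hc => hbB (key A hA b hb hc).2
      · intro a ha haA
        apply Finset.sum_eq_zero
        intro b hb
        exact if_neg fun hc => haA (key a ha b hb hc).1
    · have hgB : g.toF B = 0 := Finsupp.notMem_support_iff.mp hB
      rw [hgB, mul_zero]
      apply Finset.sum_eq_zero; intro a ha
      apply Finset.sum_eq_zero; intro b hb
      exact if_neg fun hc => hB ((key a ha b hb hc).2 ▸ hb)
  · have hfA : f.toF A = 0 := Finsupp.notMem_support_iff.mp hA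
    rw [hfA, mul_zero, zero_mul]
    apply Finset.sum_eq_zero; intro a ha
    apply Finset.sum_eq_zero; intro b hb
    exact if_neg fun hc => hA ((key a ha b hb hc).1 ▸ ha)

lemma one_coeff (s : ℤ ×ₗ ℤ) : (1 : QTM u).toF s = if (0 : ℤ ×ₗ ℤ) = s then 1 else 0 := by
  rw [one_def, toF_sg, Finsupp.single_apply]

/-- Units of the model are (scaled) monomials. -/
theorem exists_sg_of_mul_eq_one {f g : QTM u} (hfg : f * g = 1) :
    ∃ v c, c ≠ 0 ∧ f = sg u v c := by
  classical
  have hf : f ≠ 0 := by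
    intro h; rw [h, zero_mul'] at hfg; exact zero_ne_one hfg
  have hg : g ≠ 0 := by
    intro h; rw [h, mul_zero'] at hfg; exact zero_ne_one hfg
  have hfne : f.toF.support.Nonempty := by
    rw [Finsupp.support_nonempty_iff]; exact fun h => hf (toF_injective h)
  have hgne : g.toF.support.Nonempty := by
    rw [Finsupp.support_nonempty_iff]; exact fun h => hg (toF_injective h)
  set A := f.toF.support.max' hfne with hA
  set B := g.toF.support.max' hgne with hB
  set A' := f.toF.support.min' hfne with hA'
  set B' := g.toF.support.min' hgne with hB'
  have hmax : (f * g).toF (A + B) = tw u A B * f.toF A * g.toF B :=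
    mul_coeff_max f g (fun a ha => Finset.le_max' _ a ha) (fun b hb => Finset.le_max' _ b hb)
  have hmin : (f * g).toF (A' + B') = tw u A' B' * f.toF A' * g.toF B' :=
    mul_coeff_min f g (fun a ha => Finset.min'_le _ a ha) (fun b hb => Finset.min'_le _ b hb)
  have hfA : f.toF A ≠ 0 := Finsupp.mem_support_iff.mp (Finset.max'_mem _ hfne)
  have hgB : g.toF B ≠ 0 := Finsupp.mem_support_iff.mp (Finset.max'_mem _ hgne)
  have hfA' : f.toF A' ≠ 0 := Finsupp.mem_support_iff.mp (Finset.min'_mem _ hfne)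
  have hgB' : g.toF B' ≠ 0 := Finsupp.mem_support_iff.mp (Finset.min'_mem _ hgne)
  have hABzero : A + B = 0 := by
    by_contra hne
    have : (1 : QTM u).toF (A + B) = 0 := by
      rw [one_coeff, if_neg fun h => hne h.symm]
    rw [hfg, this] at hmax
    exact (mul_ne_zero (mul_ne_zero (tw_ne_zero A B) hfA) hgB) hmax.symm
  have hABzero' : A' + B' = 0 := by
    by_contra hne
    have : (1 : QTM u).toF (A' + B') = 0 := by
      rw [one_coeff, if_neg fun h => hne h.symm]
    rw [hfg, this] at hmin
    exact (mul_ne_zero (mul_ne_zero (tw_ne_zero A' B') hfA') hgB') hmin.symm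
  have hAleA : A' ≤ A := Finset.min'_le _ _ (Finset.max'_mem _ hfne)
  have hBleB : B' ≤ B := Finset.min'_le _ _ (Finset.max'_mem _ hgne)
  have hAeq : A' = A := by
    have h1 : A' + B' ≤ A + B' := add_le_add_left hAleA _
    have h2 : A + B' ≤ A + B := add_le_add_right hBleB _
    have : A + B' = A + B := le_antisymm h2 (by rw [hABzero, ← hABzero']; exact h1)
    have hB'B : B' = B := add_left_cancel this
    rw [hB'B] at hABzero'
    exact add_right_cancel (hABzero'.trans hABzero.symm)
  have hsub : f.toF.support ⊆ {A} := by
    intro a ha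
    have h1 : a ≤ A := Finset.le_max' _ a ha
    have h2 : A ≤ a := hAeq ▸ Finset.min'_le _ a ha
    simp [le_antisymm h1 h2]
  refine ⟨A, f.toF A, hfA, ?_⟩
  have := Finsupp.support_subset_singleton.mp hsub
  exact toF_injective this

end QTM
section GroupLemmas

variable {G : Type*} [Group G]

lemma cen_zpow {s : G} (hs : ∀ g : G, s * g = g * s) (k : ℤ) (g : G) :
    s ^ k * g = g * s ^ k := (Commute.zpow_left (hs g) k).eq

lemma grp_aux {s x y : G} (hs : ∀ g : G, s * g = g * s)
    (h : x * y = s * (y * x)) (m : ℤ) : y * x ^ m = s ^ (-m) * (x ^ m * y) := by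
  have hC : ∀ g : G, Commute s g := fun g => hs g
  have hyx : y * x = s⁻¹ * (x * y) := by
    rw [h, ← mul_assoc, inv_mul_cancel, one_mul]
  have hyxinv : y * x⁻¹ = s * (x⁻¹ * y) := by
    calc y * x⁻¹ = x⁻¹ * (x * y) * x⁻¹ := by group
      _ = x⁻¹ * (s * (y * x)) * x⁻¹ := by rw [h]
      _ = (x⁻¹ * s) * (y * (x * x⁻¹)) := by group
      _ = (s * x⁻¹) * (y * 1) := by rw [← hs x⁻¹, mul_inv_cancel]
      _ = s * (x⁻¹ * y) := by group
  induction m using Int.induction_on with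
  | zero => simp
  | succ n ih =>
    have hx : x ^ ((n : ℤ) + 1) = x ^ (n : ℤ) * x := zpow_add_one x n
    have hmerge : s ^ (-(n : ℤ)) * s⁻¹ = s ^ (-((n : ℤ) + 1)) := by
      rw [← zpow_neg_one, ← zpow_add]
      congr 1
      ring
    calc y * x ^ ((n : ℤ) + 1) = (y * x ^ (n : ℤ)) * x := by rw [hx, mul_assoc]
      _ = (s ^ (-(n : ℤ)) * (x ^ (n : ℤ) * y)) * x := by rw [ih]
      _ = s ^ (-(n : ℤ)) * (x ^ (n : ℤ) * (y * x)) := by group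
      _ = s ^ (-(n : ℤ)) * (x ^ (n : ℤ) * (s⁻¹ * (x * y))) := by rw [hyx]
      _ = s ^ (-(n : ℤ)) * ((x ^ (n : ℤ) * s⁻¹) * (x * y)) := by group
      _ = s ^ (-(n : ℤ)) * ((s⁻¹ * x ^ (n : ℤ)) * (x * y)) := by
          rw [((hC (x ^ (n : ℤ))).inv_left).eq]
      _ = (s ^ (-(n : ℤ)) * s⁻¹) * (x ^ (n : ℤ) * x * y) := by group
      _ = s ^ (-((n : ℤ) + 1)) * (x ^ ((n : ℤ) + 1) * y) := by rw [hmerge, hx]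
  | pred n ih =>
    have hx : x ^ (-(n : ℤ) - 1) = x ^ (-(n : ℤ)) * x⁻¹ := by
      rw [← zpow_neg_one, ← zpow_add, sub_eq_add_neg]
    have hmerge : s ^ (- -(n : ℤ)) * s = s ^ (-(-(n : ℤ) - 1)) := by
      rw [← zpow_add_one]
      congr 1
      ring
    calc y * x ^ (-(n : ℤ) - 1) = (y * x ^ (-(n : ℤ))) * x⁻¹ := by rw [hx, mul_assoc]
      _ = (s ^ (- -(n : ℤ)) * (x ^ (-(n : ℤ)) * y)) * x⁻¹ := by rw [ih]
      _ = s ^ (- -(n : ℤ)) * (x ^ (-(n : ℤ)) * (y * x⁻¹)) := by group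
      _ = s ^ (- -(n : ℤ)) * (x ^ (-(n : ℤ)) * (s * (x⁻¹ * y))) := by rw [hyxinv]
      _ = s ^ (- -(n : ℤ)) * ((x ^ (-(n : ℤ)) * s) * (x⁻¹ * y)) := by group
      _ = s ^ (- -(n : ℤ)) * ((s * x ^ (-(n : ℤ))) * (x⁻¹ * y)) := by rw [hs (x ^ (-(n : ℤ)))]
      _ = (s ^ (- -(n : ℤ)) * s) * (x ^ (-(n : ℤ)) * x⁻¹ * y) := by group
      _ = s ^ (-(-(n : ℤ) - 1)) * (x ^ (-(n : ℤ) - 1) * y) := by rw [hmerge, hx]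

lemma grp_shift {s : G} (hs : ∀ g : G, s * g = g * s) (k : ℤ) {A B : G}
    (h : A = s ^ k * B) : B = s ^ (-k) * A := by
  rw [h, ← mul_assoc, ← zpow_add]
  norm_num

lemma grp_aux2 {s x y : G} (hs : ∀ g : G, s * g = g * s)
    (h : x * y = s * (y * x)) (m n : ℤ) :
    y ^ n * x ^ m = s ^ (-(n * m)) * (x ^ m * y ^ n) := by
  have h1 : y * x ^ m = s ^ (-m) * (x ^ m * y) := grp_aux hs h m
  have hs' : ∀ g : G, s ^ (-m) * g = g * s ^ (-m) := fun g => cen_zpow hs (-m) g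
  have h2 : x ^ m * y ^ n = (s ^ (-m)) ^ (-n) * (y ^ n * x ^ m) := grp_aux hs' h1 n
  have h3 : y ^ n * x ^ m = (s ^ (-m)) ^ (-(-n)) * (x ^ m * y ^ n) :=
    grp_shift hs' (-n) h2
  have he : (-m) * (-(-n)) = -(n * m) := by ring
  rw [h3, ← zpow_mul, he]

end GroupLemmas

noncomputable section QTorusSide

open Finsupp

variable (u : ℂˣ)

/-- The scalar `q` as a central unit of the quantum torus. -/
def cU : (QTorus (u : ℂ))ˣ := Units.map (algebraMap ℂ (QTorus (u : ℂ))).toMonoidHom u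

lemma cU_val : ((cU u : (QTorus (u : ℂ))ˣ) : QTorus (u : ℂ))
    = algebraMap ℂ (QTorus (u : ℂ)) (u : ℂ) := rfl

lemma cU_central (w : (QTorus (u : ℂ))ˣ) : cU u * w = w * cU u := by
  apply Units.ext
  rw [Units.val_mul, Units.val_mul, cU_val]
  exact Algebra.commutes (u : ℂ) (w : QTorus (u : ℂ))

lemma cU_zpow_val (k : ℤ) : ((cU u ^ k : (QTorus (u : ℂ))ˣ) : QTorus (u : ℂ))
    = algebraMap ℂ (QTorus (u : ℂ)) ((u ^ k : ℂˣ) : ℂ) := by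
  have : cU u ^ k = Units.map (algebraMap ℂ (QTorus (u : ℂ))).toMonoidHom (u ^ k) := by
    rw [map_zpow]
    rfl
  rw [this]
  rfl

/-- The defining commutation relation, as an identity of units. -/
lemma xy_rel : QTx (u : ℂ) * QTy (u : ℂ) = cU u * (QTy (u : ℂ) * QTx (u : ℂ)) := by
  apply Units.ext
  rw [Units.val_mul, Units.val_mul, Units.val_mul, cU_val]
  have h := RingQuot.mkAlgHom_rel ℂ (QTRel.comm (q := (u : ℂ)))
  rw [map_mul, map_smul, map_mul] at h
  calc (QTx (u : ℂ) : QTorus (u : ℂ)) * (QTy (u : ℂ) : QTorus (u : ℂ))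
      = (u : ℂ) • ((QTy (u : ℂ) : QTorus (u : ℂ)) * (QTx (u : ℂ) : QTorus (u : ℂ))) := h
    _ = algebraMap ℂ (QTorus (u : ℂ)) (u : ℂ) *
        ((QTy (u : ℂ) : QTorus (u : ℂ)) * (QTx (u : ℂ) : QTorus (u : ℂ))) := Algebra.smul_def _ _

/-- The monomial `x^m y^n` as a unit of the quantum torus. -/
def mono (v : ℤ ×ₗ ℤ) : (QTorus (u : ℂ))ˣ :=
  QTx (u : ℂ) ^ (ofLex v).1 * QTy (u : ℂ) ^ (ofLex v).2

lemma mono_mul (v w : ℤ ×ₗ ℤ) :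
    mono u v * mono u w = cU u ^ (-((ofLex v).2 * (ofLex w).1)) * mono u (v + w) := by
  have hswap := grp_aux2 (cU_central u) (xy_rel u) ((ofLex w).1) ((ofLex v).2)
  have h1 : (ofLex (v + w)).1 = (ofLex v).1 + (ofLex w).1 := rfl
  have h2 : (ofLex (v + w)).2 = (ofLex v).2 + (ofLex w).2 := rfl
  calc mono u v * mono u w
      = QTx (u : ℂ) ^ (ofLex v).1 *
        ((QTy (u : ℂ) ^ (ofLex v).2 * QTx (u : ℂ) ^ (ofLex w).1) * QTy (u : ℂ) ^ (ofLex w).2) := by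
        rw [mono, mono]; group
    _ = QTx (u : ℂ) ^ (ofLex v).1 *
        ((cU u ^ (-((ofLex v).2 * (ofLex w).1)) *
          (QTx (u : ℂ) ^ (ofLex w).1 * QTy (u : ℂ) ^ (ofLex v).2)) * QTy (u : ℂ) ^ (ofLex w).2) := by
        rw [hswap]
    _ = (QTx (u : ℂ) ^ (ofLex v).1 * cU u ^ (-((ofLex v).2 * (ofLex w).1))) *
        (QTx (u : ℂ) ^ (ofLex w).1 * QTy (u : ℂ) ^ (ofLex v).2 * QTy (u : ℂ) ^ (ofLex w).2) := by
        group
    _ = (cU u ^ (-((ofLex v).2 * (ofLex w).1)) * QTx (u : ℂ) ^ (ofLex v).1) *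
        (QTx (u : ℂ) ^ (ofLex w).1 * QTy (u : ℂ) ^ (ofLex v).2 * QTy (u : ℂ) ^ (ofLex w).2) := by
        rw [cen_zpow (cU_central u) (-((ofLex v).2 * (ofLex w).1)) (QTx (u : ℂ) ^ (ofLex v).1)]
    _ = cU u ^ (-((ofLex v).2 * (ofLex w).1)) *
        (QTx (u : ℂ) ^ (ofLex v).1 * QTx (u : ℂ) ^ (ofLex w).1 *
         (QTy (u : ℂ) ^ (ofLex v).2 * QTy (u : ℂ) ^ (ofLex w).2)) := by
        group
    _ = cU u ^ (-((ofLex v).2 * (ofLex w).1)) * mono u (v + w) := by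
        rw [mono, h1, h2, zpow_add, zpow_add]

lemma mono_zero : mono u 0 = 1 := by
  have h1 : (ofLex (0 : ℤ ×ₗ ℤ)).1 = 0 := rfl
  have h2 : (ofLex (0 : ℤ ×ₗ ℤ)).2 = 0 := rfl
  rw [mono, h1, h2, zpow_zero, zpow_zero, one_mul]

end QTorusSide
noncomputable section Homs

open Finsupp

variable (u : ℂˣ)

/-- Generators for the map out of the free algebra. -/
def gens : Fin 4 → QTM u :=
  ![QTM.sg u (toLex (1, 0)) 1, QTM.sg u (toLex (-1, 0)) 1,
    QTM.sg u (toLex (0, 1)) 1, QTM.sg u (toLex (0, -1)) 1]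

lemma gens_rel : ∀ ⦃x y : FreeAlgebra ℂ (Fin 4)⦄, QTRel (u : ℂ) x y →
    (FreeAlgebra.lift ℂ (gens u)) x = (FreeAlgebra.lift ℂ (gens u)) y := by
  intro x y r
  induction r with
  | xinv =>
    rw [map_mul, map_one, FreeAlgebra.lift_ι_apply, FreeAlgebra.lift_ι_apply]
    show QTM.sg u (toLex (1, 0)) 1 * QTM.sg u (toLex (-1, 0)) 1 = 1
    rw [QTM.sg_mul_sg, QTM.one_def]
    have hv : (toLex (1, 0) : ℤ ×ₗ ℤ) + toLex (-1, 0) = 0 := by decide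
    rw [hv]
    congr 1
    simp only [QTM.tw, ofLex_toLex, mul_one]
    norm_num
  | xinv' =>
    rw [map_mul, map_one, FreeAlgebra.lift_ι_apply, FreeAlgebra.lift_ι_apply]
    show QTM.sg u (toLex (-1, 0)) 1 * QTM.sg u (toLex (1, 0)) 1 = 1
    rw [QTM.sg_mul_sg, QTM.one_def]
    have hv : (toLex (-1, 0) : ℤ ×ₗ ℤ) + toLex (1, 0) = 0 := by decide
    rw [hv]
    congr 1
    simp only [QTM.tw, ofLex_toLex, mul_one]
    norm_num
  | yinv =>
    rw [map_mul, map_one, FreeAlgebra.lift_ι_apply, FreeAlgebra.lift_ι_apply]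
    show QTM.sg u (toLex (0, 1)) 1 * QTM.sg u (toLex (0, -1)) 1 = 1
    rw [QTM.sg_mul_sg, QTM.one_def]
    have hv : (toLex (0, 1) : ℤ ×ₗ ℤ) + toLex (0, -1) = 0 := by decide
    rw [hv]
    congr 1
    simp only [QTM.tw, ofLex_toLex, mul_one]
    norm_num
  | yinv' =>
    rw [map_mul, map_one, FreeAlgebra.lift_ι_apply, FreeAlgebra.lift_ι_apply]
    show QTM.sg u (toLex (0, -1)) 1 * QTM.sg u (toLex (0, 1)) 1 = 1
    rw [QTM.sg_mul_sg, QTM.one_def]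
    have hv : (toLex (0, -1) : ℤ ×ₗ ℤ) + toLex (0, 1) = 0 := by decide
    rw [hv]
    congr 1
    simp only [QTM.tw, ofLex_toLex, mul_one]
    norm_num
  | comm =>
    rw [map_mul, map_smul, map_mul]
    simp only [FreeAlgebra.lift_ι_apply]
    show QTM.sg u (toLex (1, 0)) 1 * QTM.sg u (toLex (0, 1)) 1
      = (u : ℂ) • (QTM.sg u (toLex (0, 1)) 1 * QTM.sg u (toLex (1, 0)) 1)
    rw [QTM.sg_mul_sg, QTM.sg_mul_sg, QTM.smul_sg]
    have h1 : (toLex (1, 0) : ℤ ×ₗ ℤ) + toLex (0, 1) = toLex (0, 1) + toLex (1, 0) := by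
      rw [add_comm]
    rw [h1]
    congr 1
    show QTM.tw u (toLex (1, 0)) (toLex (0, 1)) * 1 * 1
      = (u : ℂ) * (QTM.tw u (toLex (0, 1)) (toLex (1, 0)) * 1 * 1)
    simp only [QTM.tw, ofLex_toLex, mul_one]
    norm_num

/-- The algebra map from the quantum torus to the model. -/
def Phi : QTorus (u : ℂ) →ₐ[ℂ] QTM u :=
  RingQuot.liftAlgHom ℂ ⟨FreeAlgebra.lift ℂ (gens u), gens_rel u⟩

lemma Phi_x : Phi u ((QTx (u : ℂ) : (QTorus (u : ℂ))ˣ) : QTorus (u : ℂ))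
    = QTM.sg u (toLex (1, 0)) 1 := by
  show Phi u (RingQuot.mkAlgHom ℂ (QTRel (u : ℂ)) (FreeAlgebra.ι ℂ 0)) = _
  rw [Phi, RingQuot.liftAlgHom_mkAlgHom_apply, FreeAlgebra.lift_ι_apply]
  rfl

lemma Phi_xinv : Phi u ((QTx (u : ℂ)).inv) = QTM.sg u (toLex (-1, 0)) 1 := by
  show Phi u (RingQuot.mkAlgHom ℂ (QTRel (u : ℂ)) (FreeAlgebra.ι ℂ 1)) = _
  rw [Phi, RingQuot.liftAlgHom_mkAlgHom_apply, FreeAlgebra.lift_ι_apply]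
  rfl

lemma Phi_y : Phi u ((QTy (u : ℂ) : (QTorus (u : ℂ))ˣ) : QTorus (u : ℂ))
    = QTM.sg u (toLex (0, 1)) 1 := by
  show Phi u (RingQuot.mkAlgHom ℂ (QTRel (u : ℂ)) (FreeAlgebra.ι ℂ 2)) = _
  rw [Phi, RingQuot.liftAlgHom_mkAlgHom_apply, FreeAlgebra.lift_ι_apply]
  rfl

lemma Phi_yinv : Phi u ((QTy (u : ℂ)).inv) = QTM.sg u (toLex (0, -1)) 1 := by
  show Phi u (RingQuot.mkAlgHom ℂ (QTRel (u : ℂ)) (FreeAlgebra.ι ℂ 3)) = _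
  rw [Phi, RingQuot.liftAlgHom_mkAlgHom_apply, FreeAlgebra.lift_ι_apply]
  rfl

end Homs
noncomputable section PsiSection

open Finsupp

variable (u : ℂˣ)

/-- Underlying function of the inverse map. -/
def PsiFun (f : QTM u) : QTorus (u : ℂ) :=
  f.toF.sum fun v c => c • ((mono u v : (QTorus (u : ℂ))ˣ) : QTorus (u : ℂ))

lemma PsiFun_sg (v : ℤ ×ₗ ℤ) (c : ℂ) :
    PsiFun u (QTM.sg u v c) = c • ((mono u v : (QTorus (u : ℂ))ˣ) : QTorus (u : ℂ)) := by
  rw [PsiFun, QTM.toF_sg, Finsupp.sum_single_index]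
  rw [zero_smul]

lemma PsiFun_zero : PsiFun u 0 = 0 := by
  rw [PsiFun, QTM.toF_zero, Finsupp.sum_zero_index]

lemma PsiFun_add (f g : QTM u) : PsiFun u (f + g) = PsiFun u f + PsiFun u g := by
  rw [PsiFun, PsiFun, PsiFun, QTM.toF_add]
  exact Finsupp.sum_add_index' (fun v => zero_smul ℂ _) (fun v c₁ c₂ => add_smul c₁ c₂ _)

lemma PsiFun_smul (c : ℂ) (f : QTM u) : PsiFun u (c • f) = c • PsiFun u f := by
  induction f using QTM.induction_lin with
  | h0 => rw [smul_zero, PsiFun_zero, smul_zero]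
  | hadd f g ihf ihg => rw [smul_add, PsiFun_add, PsiFun_add, ihf, ihg, smul_add]
  | hsingle v d => rw [QTM.smul_sg, PsiFun_sg, PsiFun_sg, smul_smul]

lemma mono_val_mul (v w : ℤ ×ₗ ℤ) :
    ((mono u v : (QTorus (u : ℂ))ˣ) : QTorus (u : ℂ)) * ((mono u w : (QTorus (u : ℂ))ˣ) : QTorus (u : ℂ))
      = QTM.tw u v w • ((mono u (v + w) : (QTorus (u : ℂ))ˣ) : QTorus (u : ℂ)) := by
  have h := congrArg (Units.val) (mono_mul u v w)
  rw [Units.val_mul, Units.val_mul, cU_zpow_val] at h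
  rw [h, ← Algebra.smul_def]
  rfl

/-- The algebra map from the model to the quantum torus. -/
def Psi : QTM u →ₐ[ℂ] QTorus (u : ℂ) :=
  AlgHom.ofLinearMap
    { toFun := PsiFun u
      map_add' := PsiFun_add u
      map_smul' := PsiFun_smul u }
    (by
      show PsiFun u 1 = 1
      rw [QTM.one_def, PsiFun_sg, mono_zero, one_smul, Units.val_one])
    (by
      intro f g
      show PsiFun u (f * g) = PsiFun u f * PsiFun u g
      induction f using QTM.induction_lin with
      | h0 => rw [QTM.zero_mul', PsiFun_zero, zero_mul]
      | hadd f₁ f₂ ih₁ ih₂ =>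
        rw [QTM.add_mul', PsiFun_add, PsiFun_add, ih₁, ih₂, add_mul]
      | hsingle v c =>
        induction g using QTM.induction_lin with
        | h0 => rw [QTM.mul_zero', PsiFun_zero, mul_zero]
        | hadd g₁ g₂ ih₁ ih₂ =>
          rw [QTM.mul_add', PsiFun_add, PsiFun_add, ih₁, ih₂, mul_add]
        | hsingle w d =>
          rw [QTM.sg_mul_sg, PsiFun_sg, PsiFun_sg, PsiFun_sg, smul_mul_smul_comm,
            mono_val_mul, smul_smul]
          ring_nf)

lemma Psi_sg (v : ℤ ×ₗ ℤ) (c : ℂ) :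
    Psi u (QTM.sg u v c) = c • ((mono u v : (QTorus (u : ℂ))ˣ) : QTorus (u : ℂ)) :=
  PsiFun_sg u v c

end PsiSection
noncomputable section UnitsSection

open Finsupp

variable (u : ℂˣ)

lemma tw_neg (v : ℤ ×ₗ ℤ) : QTM.tw u (-v) v = QTM.tw u v (-v) := by
  have h1 : (ofLex (-v)) = -(ofLex v) := rfl
  simp only [QTM.tw, h1, Prod.fst_neg, Prod.snd_neg]
  congr 2
  ring

/-- Monomial units of the model. -/
def sgU (v : ℤ ×ₗ ℤ) : (QTM u)ˣ where
  val := QTM.sg u v 1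
  inv := QTM.sg u (-v) (QTM.tw u v (-v))⁻¹
  val_inv := by
    rw [QTM.sg_mul_sg, add_neg_cancel, QTM.one_def]
    congr 1
    rw [mul_one, mul_inv_cancel₀ (QTM.tw_ne_zero v (-v))]
  inv_val := by
    rw [QTM.sg_mul_sg, neg_add_cancel, QTM.one_def]
    congr 1
    rw [tw_neg, mul_inv_cancel₀ (QTM.tw_ne_zero v (-v)), one_mul]

lemma sgU_val (v : ℤ ×ₗ ℤ) : ((sgU u v : (QTM u)ˣ) : QTM u) = QTM.sg u v 1 := rfl

lemma sgU_mul (v w : ℤ ×ₗ ℤ) (h : QTM.tw u v w = 1) : sgU u v * sgU u w = sgU u (v + w) := by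
  apply Units.ext
  rw [Units.val_mul, sgU_val, sgU_val, sgU_val, QTM.sg_mul_sg, h, one_mul, mul_one]

lemma sgU_zero : sgU u 0 = 1 := by
  apply Units.ext
  rw [sgU_val, Units.val_one, QTM.one_def]

lemma tw_x_left (m : ℤ) (w : ℤ ×ₗ ℤ) : QTM.tw u (toLex (m, 0)) w = 1 := by
  simp [QTM.tw]

lemma tw_right_x (v : ℤ ×ₗ ℤ) (m : ℤ) : QTM.tw u v (toLex (0, m)) = 1 := by
  simp [QTM.tw]

lemma sgU_x_inv : (sgU u (toLex (1, 0)))⁻¹ = sgU u (toLex (-1, 0)) := by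
  apply Units.ext
  show (sgU u (toLex (1, 0))).inv = QTM.sg u (toLex (-1, 0)) 1
  show QTM.sg u (-(toLex (1, 0))) (QTM.tw u (toLex (1, 0)) (-(toLex (1, 0))))⁻¹ = _
  have h1 : -(toLex (1, 0) : ℤ ×ₗ ℤ) = toLex (-1, 0) := by decide
  have h2 : QTM.tw u (toLex (1, 0)) (toLex (-1, 0)) = 1 := tw_x_left u 1 (toLex (-1, 0))
  rw [h1, h2, inv_one]

lemma sgU_y_inv : (sgU u (toLex (0, 1)))⁻¹ = sgU u (toLex (0, -1)) := by
  apply Units.ext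
  show (sgU u (toLex (0, 1))).inv = QTM.sg u (toLex (0, -1)) 1
  show QTM.sg u (-(toLex (0, 1))) (QTM.tw u (toLex (0, 1)) (-(toLex (0, 1))))⁻¹ = _
  have h1 : -(toLex (0, 1) : ℤ ×ₗ ℤ) = toLex (0, -1) := by decide
  have h2 : QTM.tw u (toLex (0, 1)) (toLex (0, -1)) = 1 := tw_right_x u (toLex (0, 1)) (-1)
  rw [h1, h2, inv_one]

lemma sgU_x_zpow (m : ℤ) : sgU u (toLex (1, 0)) ^ m = sgU u (toLex (m, 0)) := by
  induction m using Int.induction_on with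
  | zero =>
    have h : (toLex ((0 : ℤ), (0 : ℤ))) = (0 : ℤ ×ₗ ℤ) := rfl
    rw [zpow_zero, h, sgU_zero]
  | succ n ih =>
    rw [zpow_add_one, ih, sgU_mul u _ _ (tw_x_left u n (toLex (1, 0)))]
    congr 1
  | pred n ih =>
    rw [zpow_sub_one, ih, sgU_x_inv, sgU_mul u _ _ (tw_x_left u (-n) (toLex (-1, 0)))]
    congr 1

lemma sgU_y_zpow (m : ℤ) : sgU u (toLex (0, 1)) ^ m = sgU u (toLex (0, m)) := by
  induction m using Int.induction_on with
  | zero =>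
    have h : (toLex ((0 : ℤ), (0 : ℤ))) = (0 : ℤ ×ₗ ℤ) := rfl
    rw [zpow_zero, h, sgU_zero]
  | succ n ih =>
    rw [zpow_add_one, ih, sgU_mul u _ _ (tw_right_x u (toLex (0, n)) 1)]
    congr 1
  | pred n ih =>
    rw [zpow_sub_one, ih, sgU_y_inv, sgU_mul u _ _ (tw_right_x u (toLex (0, -n)) (-1))]
    congr 1

lemma sgU_x_mul_y (a b : ℤ) :
    sgU u (toLex (a, 0)) * sgU u (toLex (0, b)) = sgU u (toLex (a, b)) := by
  rw [sgU_mul u _ _ (tw_x_left u a (toLex (0, b)))]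
  congr 1
  show toLex ((a : ℤ) + 0, (0 : ℤ) + b) = toLex (a, b)
  norm_num

end UnitsSection
noncomputable section CompSection

open Finsupp

variable (u : ℂˣ)

/-- `Phi` on units. -/
def PhiU : (QTorus (u : ℂ))ˣ →* (QTM u)ˣ :=
  Units.map (Phi u).toRingHom.toMonoidHom

lemma PhiU_val (w : (QTorus (u : ℂ))ˣ) :
    ((PhiU u w : (QTM u)ˣ) : QTM u) = Phi u (w : QTorus (u : ℂ)) := rfl

lemma PhiU_x : PhiU u (QTx (u : ℂ)) = sgU u (toLex (1, 0)) := by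
  apply Units.ext
  rw [PhiU_val, sgU_val, Phi_x]

lemma PhiU_y : PhiU u (QTy (u : ℂ)) = sgU u (toLex (0, 1)) := by
  apply Units.ext
  rw [PhiU_val, sgU_val, Phi_y]

lemma PhiU_mono (v : ℤ ×ₗ ℤ) : PhiU u (mono u v) = sgU u v := by
  rw [mono, map_mul, map_zpow, map_zpow, PhiU_x, PhiU_y, sgU_x_zpow, sgU_y_zpow,
    sgU_x_mul_y]
  rfl

lemma Phi_mono (v : ℤ ×ₗ ℤ) :
    Phi u ((mono u v : (QTorus (u : ℂ))ˣ) : QTorus (u : ℂ)) = QTM.sg u v 1 := by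
  rw [← PhiU_val, PhiU_mono, sgU_val]

lemma mono_x : mono u (toLex (1, 0)) = QTx (u : ℂ) := by
  rw [mono]
  show QTx (u : ℂ) ^ (1 : ℤ) * QTy (u : ℂ) ^ (0 : ℤ) = QTx (u : ℂ)
  rw [zpow_one, zpow_zero, mul_one]

lemma mono_xinv : mono u (toLex (-1, 0)) = (QTx (u : ℂ))⁻¹ := by
  rw [mono]
  show QTx (u : ℂ) ^ (-1 : ℤ) * QTy (u : ℂ) ^ (0 : ℤ) = (QTx (u : ℂ))⁻¹
  rw [zpow_neg_one, zpow_zero, mul_one]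

lemma mono_y : mono u (toLex (0, 1)) = QTy (u : ℂ) := by
  rw [mono]
  show QTx (u : ℂ) ^ (0 : ℤ) * QTy (u : ℂ) ^ (1 : ℤ) = QTy (u : ℂ)
  rw [zpow_one, zpow_zero, one_mul]

lemma mono_yinv : mono u (toLex (0, -1)) = (QTy (u : ℂ))⁻¹ := by
  rw [mono]
  show QTx (u : ℂ) ^ (0 : ℤ) * QTy (u : ℂ) ^ (-1 : ℤ) = (QTy (u : ℂ))⁻¹
  rw [zpow_neg_one, zpow_zero, one_mul]

lemma PsiPhi : (Psi u).comp (Phi u) = AlgHom.id ℂ (QTorus (u : ℂ)) := by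
  apply RingQuot.ringQuot_ext'
  apply FreeAlgebra.hom_ext
  funext i
  fin_cases i
  · show Psi u (Phi u (RingQuot.mkAlgHom ℂ (QTRel (u : ℂ)) (FreeAlgebra.ι ℂ 0)))
      = RingQuot.mkAlgHom ℂ (QTRel (u : ℂ)) (FreeAlgebra.ι ℂ 0)
    have hx : Phi u (RingQuot.mkAlgHom ℂ (QTRel (u : ℂ)) (FreeAlgebra.ι ℂ 0))
        = QTM.sg u (toLex (1, 0)) 1 := Phi_x u
    rw [hx, Psi_sg, mono_x, one_smul]
    rfl
  · show Psi u (Phi u (RingQuot.mkAlgHom ℂ (QTRel (u : ℂ)) (FreeAlgebra.ι ℂ 1)))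
      = RingQuot.mkAlgHom ℂ (QTRel (u : ℂ)) (FreeAlgebra.ι ℂ 1)
    have hx : Phi u (RingQuot.mkAlgHom ℂ (QTRel (u : ℂ)) (FreeAlgebra.ι ℂ 1))
        = QTM.sg u (toLex (-1, 0)) 1 := Phi_xinv u
    rw [hx, Psi_sg, mono_xinv, one_smul]
    rfl
  · show Psi u (Phi u (RingQuot.mkAlgHom ℂ (QTRel (u : ℂ)) (FreeAlgebra.ι ℂ 2)))
      = RingQuot.mkAlgHom ℂ (QTRel (u : ℂ)) (FreeAlgebra.ι ℂ 2)
    have hx : Phi u (RingQuot.mkAlgHom ℂ (QTRel (u : ℂ)) (FreeAlgebra.ι ℂ 2))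
        = QTM.sg u (toLex (0, 1)) 1 := Phi_y u
    rw [hx, Psi_sg, mono_y, one_smul]
    rfl
  · show Psi u (Phi u (RingQuot.mkAlgHom ℂ (QTRel (u : ℂ)) (FreeAlgebra.ι ℂ 3)))
      = RingQuot.mkAlgHom ℂ (QTRel (u : ℂ)) (FreeAlgebra.ι ℂ 3)
    have hx : Phi u (RingQuot.mkAlgHom ℂ (QTRel (u : ℂ)) (FreeAlgebra.ι ℂ 3))
        = QTM.sg u (toLex (0, -1)) 1 := Phi_yinv u
    rw [hx, Psi_sg, mono_yinv, one_smul]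
    rfl

lemma Psi_Phi_apply (z : QTorus (u : ℂ)) : Psi u (Phi u z) = z :=
  AlgHom.congr_fun (PsiPhi u) z

end CompSection

lemma unit_zpow_eq_one {q : ℂ} (hq : ∀ n : ℕ, 0 < n → q ^ n ≠ 1) (hq0 : q ≠ 0)
    {k : ℤ} (hk : Units.mk0 q hq0 ^ k = 1) : k = 0 := by
  set u : ℂˣ := Units.mk0 q hq0 with hu
  have key : ∀ m : ℤ, 0 < m → u ^ m ≠ 1 := by
    intro m hm hone
    have hnat : m = ((m.toNat : ℕ) : ℤ) := (Int.toNat_of_nonneg hm.le).symm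
    rw [hnat, zpow_natCast] at hone
    have hval := congrArg Units.val hone
    rw [Units.val_pow_eq_pow_val, Units.val_one] at hval
    exact hq m.toNat (by omega) hval
  rcases lt_trichotomy k 0 with h | h | h
  · exfalso
    apply key (-k) (by omega)
    rw [zpow_neg, hk, inv_one]
  · exact h
  · exact absurd hk (key k h)


/-- For `q` not a root of unity, every algebra automorphism `σ` of the quantum torus
`B = ℂ⟨x^{±1}, y^{±1}⟩/(xy = q·yx)` maps `x` to `λ·xᵃyᵇ` and `y` to `μ·xᶜyᵈ` for some
scalars `λ, μ ∈ ℂˣ` and integers `a, b, c, d` with `ad - bc = 1`. -/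
theorem quantum_torus_automorphisms (q : ℂ) (hq : ∀ n : ℕ, 0 < n → q ^ n ≠ 1)
    (σ : QTorus q ≃ₐ[ℂ] QTorus q) :
    ∃ (lam mu : ℂˣ) (a b c d : ℤ), a * d - b * c = 1 ∧
      σ (QTx q : QTorus q) = (lam : ℂ) • (((QTx q) ^ a * (QTy q) ^ b : (QTorus q)ˣ) : QTorus q) ∧
      σ (QTy q : QTorus q) = (mu : ℂ) • (((QTx q) ^ c * (QTy q) ^ d : (QTorus q)ˣ) : QTorus q) := by
  by_cases hq0 : q = 0
  · -- the quantum torus is the zero ring in this degenerate case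
    subst hq0
    have hrel := RingQuot.mkAlgHom_rel ℂ (QTRel.comm (q := (0 : ℂ)))
    rw [map_mul, map_smul, map_mul, zero_smul] at hrel
    have h10 : (1 : QTorus (0 : ℂ)) = 0 := by
      have h := Units.inv_mul (QTx (0 : ℂ) * QTy (0 : ℂ))
      rw [Units.val_mul] at h
      rw [show ((QTx (0:ℂ) : (QTorus (0:ℂ))ˣ) : QTorus (0:ℂ)) *
          ((QTy (0:ℂ) : (QTorus (0:ℂ))ˣ) : QTorus (0:ℂ)) = 0 from hrel, mul_zero] at h
      exact h.symm
    have hsub : Subsingleton (QTorus (0 : ℂ)) := subsingleton_of_zero_eq_one h10.symm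
    exact ⟨1, 1, 1, 0, 0, 1, by norm_num, Subsingleton.elim _ _, Subsingleton.elim _ _⟩
  · set u : ℂˣ := Units.mk0 q hq0 with hu
    -- image of x under σ, as a unit of the model
    let Wx : (QTorus (u : ℂ))ˣ :=
      Units.map (σ.toAlgHom.toRingHom.toMonoidHom) (QTx (u : ℂ))
    let Wy : (QTorus (u : ℂ))ˣ :=
      Units.map (σ.toAlgHom.toRingHom.toMonoidHom) (QTy (u : ℂ))
    let Vx : (QTM u)ˣ := PhiU u Wx
    let Vy : (QTM u)ˣ := PhiU u Wy
    obtain ⟨v, lam, hlam, hfv⟩ := QTM.exists_sg_of_mul_eq_one (Vx.val_inv)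
    obtain ⟨w, mu, hmu, hgw⟩ := QTM.exists_sg_of_mul_eq_one (Vy.val_inv)
    have hPhix : Phi u (σ ((QTx (u : ℂ) : (QTorus (u : ℂ))ˣ) : QTorus (u : ℂ)))
        = QTM.sg u v lam := hfv
    have hPhiy : Phi u (σ ((QTy (u : ℂ) : (QTorus (u : ℂ))ˣ) : QTorus (u : ℂ)))
        = QTM.sg u w mu := hgw
    -- recover σ x and σ y
    have hsx : σ ((QTx (u : ℂ) : (QTorus (u : ℂ))ˣ) : QTorus (u : ℂ))
        = lam • ((mono u v : (QTorus (u : ℂ))ˣ) : QTorus (u : ℂ)) := by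
      rw [← Psi_Phi_apply u (σ ((QTx (u : ℂ) : (QTorus (u : ℂ))ˣ) : QTorus (u : ℂ))), hPhix,
        Psi_sg]
    have hsy : σ ((QTy (u : ℂ) : (QTorus (u : ℂ))ˣ) : QTorus (u : ℂ))
        = mu • ((mono u w : (QTorus (u : ℂ))ˣ) : QTorus (u : ℂ)) := by
      rw [← Psi_Phi_apply u (σ ((QTy (u : ℂ) : (QTorus (u : ℂ))ˣ) : QTorus (u : ℂ))), hPhiy,
        Psi_sg]
    -- the commutation relation forces the determinant condition
    have hrel := RingQuot.mkAlgHom_rel ℂ (QTRel.comm (q := (u : ℂ)))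
    rw [map_mul, map_smul, map_mul] at hrel
    have hrelσ : σ ((QTx (u : ℂ) : (QTorus (u : ℂ))ˣ) : QTorus (u : ℂ)) *
        σ ((QTy (u : ℂ) : (QTorus (u : ℂ))ˣ) : QTorus (u : ℂ))
        = (u : ℂ) • (σ ((QTy (u : ℂ) : (QTorus (u : ℂ))ˣ) : QTorus (u : ℂ)) *
          σ ((QTx (u : ℂ) : (QTorus (u : ℂ))ˣ) : QTorus (u : ℂ))) := by
      exact (map_mul σ _ _).symm.trans ((congrArg σ hrel).trans
        ((map_smul σ _ _).trans (congrArg _ (map_mul σ _ _))))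
    have hrelΦ : QTM.sg u v lam * QTM.sg u w mu
        = (u : ℂ) • (QTM.sg u w mu * QTM.sg u v lam) := by
      rw [← hPhix, ← hPhiy]
      exact (map_mul (Phi u) _ _).symm.trans ((congrArg (Phi u) hrelσ).trans
        ((map_smul (Phi u) _ _).trans (congrArg _ (map_mul (Phi u) _ _))))
    rw [QTM.sg_mul_sg, QTM.sg_mul_sg, QTM.smul_sg, add_comm w v] at hrelΦ
    have hcoeff : QTM.tw u v w * lam * mu = (u : ℂ) * (QTM.tw u w v * mu * lam) := by
      have := congrArg (fun z : QTM u => z.toF (v + w)) hrelΦ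
      simpa only [QTM.toF_sg, Finsupp.single_eq_same] using this
    have htw : QTM.tw u v w = (u : ℂ) * QTM.tw u w v := by
      have hc : QTM.tw u v w * (lam * mu) = ((u : ℂ) * QTM.tw u w v) * (lam * mu) := by
        linear_combination hcoeff
      exact mul_right_cancel₀ (mul_ne_zero hlam hmu) hc
    have hunits : (u ^ (-((ofLex v).2 * (ofLex w).1)) : ℂˣ)
        = u * u ^ (-((ofLex w).2 * (ofLex v).1)) := by
      apply Units.ext
      rw [Units.val_mul]
      exact htw
    have hk1 : u ^ ((-((ofLex v).2 * (ofLex w).1)) - (1 + -((ofLex w).2 * (ofLex v).1))) = 1 := by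
      rw [zpow_sub]
      rw [show u ^ ((1 : ℤ) + -((ofLex w).2 * (ofLex v).1))
          = u * u ^ (-((ofLex w).2 * (ofLex v).1)) from by rw [zpow_add, zpow_one]]
      rw [hunits, mul_inv_cancel]
    have hk0 := unit_zpow_eq_one hq hq0 hk1
    refine ⟨Units.mk0 lam hlam, Units.mk0 mu hmu, (ofLex v).1, (ofLex v).2,
      (ofLex w).1, (ofLex w).2, ?_, ?_, ?_⟩
    · linear_combination hk0
    · exact hsx
    · exact hsy
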